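/- For all finite simple graphs G and H, the augmented inductive dimension is additive under the Zykov join: dim⁺(G ⊕ H) = dim⁺(G) + dim⁺(H). -/

import Mathlib

open Finset
open scoped Classical

/-- Inductive dimension of the subgraph of `G` induced on the vertex set `A`:
`dim ∅ = −1` and `dim A = 1 + (1/|A|) Σ_{v ∈ A} dim (S(v))`, where `S(v)` is the
unit sphere of `v` inside `A` (the neighbours of `v` lying in `A`). -/
noncomputable def indDim {V : Type*} (G : SimpleGraph V) : Finset V → ℚ
  | A =>
    if h : A = ∅ then -1
    else 1 + (A.card : ℚ)⁻¹ *
      ∑ v ∈ A.attach, indDim G (A.filter (fun w => G.Adj v.1 w))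
termination_by A => A.card
decreasing_by
  apply Finset.card_lt_card
  rw [Finset.ssubset_iff_of_subset (Finset.filter_subset _ _)]
  exact ⟨v.1, v.2, fun hmem => G.irrefl (Finset.mem_filter.mp hmem).2⟩

/-- The inductive dimension of a finite simple graph. -/
noncomputable def graphDim {V : Type*} [Fintype V] (G : SimpleGraph V) : ℚ :=
  indDim G Finset.univ

/-- The Zykov join of two finite simple graphs: all of `G`, all of `H`, and all
edges between a vertex of `G` and a vertex of `H`. -/
def zykovJoin {V W : Type*} (G : SimpleGraph V) (H : SimpleGraph W) :
    SimpleGraph (V ⊕ W) where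
  Adj a b :=
    match a, b with
    | Sum.inl v, Sum.inl w => G.Adj v w
    | Sum.inr v, Sum.inr w => H.Adj v w
    | Sum.inl _, Sum.inr _ => True
    | Sum.inr _, Sum.inl _ => True
  symm := by
    constructor
    rintro (v | v) (w | w) h
    · exact G.adj_symm h
    · trivial
    · trivial
    · exact H.adj_symm h
  loopless := by
    constructor
    rintro (v | v) h
    · exact G.irrefl h
    · exact H.irrefl h

lemma indDim_def {V : Type*} (G : SimpleGraph V) (A : Finset V) :
    indDim G A = if A = ∅ then -1
      else 1 + (A.card : ℚ)⁻¹ * ∑ v ∈ A, indDim G (A.filter (fun w => G.Adj v w)) := by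
  rw [indDim]
  split_ifs with h
  · rfl
  · rw [Finset.sum_attach A (fun v => indDim G (A.filter (fun w => G.Adj v w)))]

lemma sum_indDim_sphere {V : Type*} (G : SimpleGraph V) (A : Finset V) :
    ∑ v ∈ A, indDim G (A.filter (fun w => G.Adj v w)) = A.card * (indDim G A - 1) := by
  rcases eq_or_ne A ∅ with h | h
  · simp [h]
  · have hc : (A.card : ℚ) ≠ 0 := by
      exact_mod_cast Finset.card_ne_zero.mpr (Finset.nonempty_of_ne_empty h)
    rw [indDim_def G A, if_neg h]
    field_simp
    ring

lemma join_indDim_aux {V W : Type*} (G : SimpleGraph V) (H : SimpleGraph W) :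
    ∀ n (A : Finset V) (B : Finset W), A.card + B.card = n →
    indDim (zykovJoin G H) (A.map .inl ∪ B.map .inr)
      = 1 + indDim G A + indDim H B := by
  intro n
  induction n using Nat.strong_induction_on with
  | _ n IH =>
    intro A B hn
    have hdisj : Disjoint (A.map (.inl : V ↪ V ⊕ W)) (B.map .inr) := by
      simp [Finset.disjoint_left]
    rcases eq_or_ne (A.map (.inl : V ↪ V ⊕ W) ∪ B.map .inr) ∅ with h | h
    · rw [Finset.union_eq_empty, Finset.map_eq_empty, Finset.map_eq_empty] at h
      rw [h.1, h.2]
      simp [indDim_def]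
    · have hA0 : ¬ (A = ∅ ∧ B = ∅) := by
        rintro ⟨h1, h2⟩; exact h (by simp [h1, h2])
      have hcard : ((A.map (.inl : V ↪ V ⊕ W) ∪ B.map .inr).card : ℚ)
          = A.card + B.card := by
        rw [Finset.card_union_of_disjoint hdisj, Finset.card_map, Finset.card_map]
        push_cast; ring
      have hN : (A.card : ℚ) + B.card ≠ 0 := by
        have : A.card + B.card ≠ 0 := by
          intro h0
          exact hA0 ⟨Finset.card_eq_zero.mp (Nat.eq_zero_of_add_eq_zero_right h0),
            Finset.card_eq_zero.mp (Nat.eq_zero_of_add_eq_zero_left h0)⟩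
        exact_mod_cast this
      rw [indDim_def, if_neg h, hcard, Finset.sum_union hdisj,
        Finset.sum_map, Finset.sum_map]
      -- compute spheres of inl vertices
      have sphL : ∀ v ∈ A,
          (A.map (.inl : V ↪ V ⊕ W) ∪ B.map .inr).filter
            (fun w => (zykovJoin G H).Adj (Sum.inl v) w)
          = (A.filter (fun w => G.Adj v w)).map .inl ∪ B.map .inr := by
        intro v _
        ext x
        rcases x with u | u <;> rw [Finset.mem_filter] <;>
          simp [zykovJoin, Finset.mem_filter, Finset.mem_union]
      have sphR : ∀ w ∈ B,
          (A.map (.inl : V ↪ V ⊕ W) ∪ B.map .inr).filter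
            (fun z => (zykovJoin G H).Adj (Sum.inr w) z)
          = A.map .inl ∪ (B.filter (fun z => H.Adj w z)).map .inr := by
        intro w _
        ext x
        rcases x with u | u <;> rw [Finset.mem_filter] <;>
          simp [zykovJoin, Finset.mem_filter, Finset.mem_union]
      have hIHL : ∀ v ∈ A,
          indDim (zykovJoin G H) ((A.map (.inl : V ↪ V ⊕ W) ∪ B.map .inr).filter
            (fun w => (zykovJoin G H).Adj ((.inl : V ↪ V ⊕ W) v) w))
          = 1 + indDim G (A.filter (fun w => G.Adj v w)) + indDim H B := by
        intro v hv
        rw [show ((.inl : V ↪ V ⊕ W) v) = Sum.inl v from rfl, sphL v hv]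
        refine IH ((A.filter (fun w => G.Adj v w)).card + B.card) ?_ _ _ rfl
        have : (A.filter (fun w => G.Adj v w)).card < A.card := by
          apply Finset.card_lt_card
          rw [Finset.ssubset_iff_of_subset (Finset.filter_subset _ _)]
          exact ⟨v, hv, fun hmem => G.irrefl (Finset.mem_filter.mp hmem).2⟩
        omega
      have hIHR : ∀ w ∈ B,
          indDim (zykovJoin G H) ((A.map (.inl : V ↪ V ⊕ W) ∪ B.map .inr).filter
            (fun z => (zykovJoin G H).Adj ((.inr : W ↪ V ⊕ W) w) z))
          = 1 + indDim G A + indDim H (B.filter (fun z => H.Adj w z)) := by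
        intro w hw
        rw [show ((.inr : W ↪ V ⊕ W) w) = Sum.inr w from rfl, sphR w hw]
        refine IH (A.card + (B.filter (fun z => H.Adj w z)).card) ?_ _ _ rfl
        have : (B.filter (fun z => H.Adj w z)).card < B.card := by
          apply Finset.card_lt_card
          rw [Finset.ssubset_iff_of_subset (Finset.filter_subset _ _)]
          exact ⟨w, hw, fun hmem => H.irrefl (Finset.mem_filter.mp hmem).2⟩
        omega
      rw [Finset.sum_congr rfl hIHL, Finset.sum_congr rfl hIHR]
      simp only [Finset.sum_add_distrib, Finset.sum_const, nsmul_eq_mul,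
        sum_indDim_sphere]
      field_simp
      ring


/-- The augmented inductive dimension `dim⁺ = 1 + dim` is additive for the
Zykov join: `dim⁺(G ⊕ H) = dim⁺(G) + dim⁺(H)`. -/
theorem augmented_dim_join {V W : Type*} [Fintype V] [Fintype W]
    (G : SimpleGraph V) (H : SimpleGraph W) :
    1 + graphDim (zykovJoin G H) = (1 + graphDim G) + (1 + graphDim H) := by
  have huniv : (Finset.univ : Finset (V ⊕ W))
      = (Finset.univ : Finset V).map .inl ∪ (Finset.univ : Finset W).map .inr := by
    ext x
    cases x <;> simp
  unfold graphDim
  rw [huniv, join_indDim_aux G H _ _ _ rfl]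
  ring
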